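/- For every a > 0 and b ∈ (0,1), Γ(a+b) ≤ a^b · Γ(a); equivalently, B(a,b) ≥ Γ(b)·a^{−b} where B is the Beta function. -/

import Mathlib

open MeasureTheory ProbabilityTheory Real
open scoped RealInnerProductSpace ENNReal NNReal

theorem stmt_11 (a b : ℝ) (ha : 0 < a) (hb0 : 0 < b) (hb1 : b < 1) :
    Real.Gamma (a+b) ≤ a ^ b * Real.Gamma a ∧
    Real.Gamma a * Real.Gamma b / Real.Gamma (a+b) ≥ Real.Gamma b * a ^ (-b) := by
  have h1b : 0 < 1 - b := by linarith
  have key := Real.Gamma_mul_add_mul_le_rpow_Gamma_mul_rpow_Gamma ha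
    (show (0:ℝ) < a + 1 by linarith) h1b hb0 (by ring)
  have harr : (1 - b) * a + b * (a + 1) = a + b := by ring
  rw [harr, Real.Gamma_add_one ha.ne'] at key
  have hGa : 0 < Real.Gamma a := Real.Gamma_pos_of_pos ha
  have hGb : 0 < Real.Gamma b := Real.Gamma_pos_of_pos hb0
  have hGab : 0 < Real.Gamma (a + b) := Real.Gamma_pos_of_pos (by linarith)
  have main : Real.Gamma (a+b) ≤ a ^ b * Real.Gamma a := by
    calc Real.Gamma (a+b) ≤ Real.Gamma a ^ (1-b) * (a * Real.Gamma a) ^ b := key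
      _ = a ^ b * Real.Gamma a := by
          rw [Real.mul_rpow ha.le hGa.le, mul_comm, mul_assoc,
            ← Real.rpow_add hGa]
          norm_num
  refine ⟨main, ?_⟩
  rw [ge_iff_le, div_eq_mul_inv, Real.rpow_neg ha.le]
  rw [mul_comm (Real.Gamma a), mul_assoc, mul_le_mul_iff_right₀ hGb,
    inv_le_iff_one_le_mul₀ (by positivity : (0:ℝ) < a ^ b)]
  rw [mul_assoc, mul_comm (Real.Gamma (a+b))⁻¹, ← div_eq_mul_inv, mul_div_assoc',
    le_div_iff₀ hGab]
  nlinarith [main]
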